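/- The integral binary quadratic forms q₁(x,y) = 2y² - 10xy and q₂(x,y) = 8y² - 10xy (with Gram matrices [[0,-5],[-5,2]] and [[0,-5],[-5,8]] respectively) are not equivalent over ℤ: there is no ℤ-linear automorphism T of ℤ² such that q₂(T(v)) = q₁(v) for all v ∈ ℤ². (Indeed q₁(0,1) = 2, while q₂ does not represent 2.) -/

import Mathlib

/-- The integral binary quadratic forms `q₁(x,y) = 2y² - 10xy` and
`q₂(x,y) = 8y² - 10xy` (with Gram matrices `[[0,-5],[-5,2]]` and `[[0,-5],[-5,8]]`)
are not equivalent over `ℤ`: there is no `ℤ`-linear automorphism `T` of `ℤ²` with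
`q₂(T v) = q₁(v)` for all `v`. -/
theorem binary_forms_not_equivalent :
    ¬ ∃ T : (Fin 2 → ℤ) ≃ₗ[ℤ] (Fin 2 → ℤ),
      ∀ v : Fin 2 → ℤ,
        8 * (T v 1) ^ 2 - 10 * (T v 0) * (T v 1) =
          2 * (v 1) ^ 2 - 10 * (v 0) * (v 1) := by
  rintro ⟨T, h⟩
  have h1 := h ![0, 1]
  simp only [Matrix.cons_val_zero, Matrix.cons_val_one, Matrix.head_cons] at h1
  set a := T ![0, 1] 0 with ha
  set b := T ![0, 1] 1 with hb
  have key : b * (4 * b - 5 * a) = 1 := by nlinarith [h1]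
  have hu : IsUnit b := IsUnit.of_mul_eq_one _ key
  rcases Int.isUnit_iff.mp hu with h' | h' <;> rw [h'] at key <;> omega
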